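/- arXiv:2512.11504 — 3 statements merged into one kernel-verified Lean document; each statement's English description precedes it below -/
import Mathlib

section
/- Let G₁, G₂ be two-terminal graphs and G₁ ∥ G₂ their parallel composition (identifying sources and identifying sinks). Then the split reliability polynomials satisfy S(G₁ ∥ G₂; p) = S(G₁; p) · S(G₂; p) as polynomials in p. -/
open scoped Classical

/-- A (multi)graph: a vertex type, a finite edge type, and an endpoint map
sending each edge to an unordered pair of vertices. -/
structure Multigraph where
  V : Type
  E : Type
  [fintE : Fintype E]
  ends : E → Sym2 V

attribute [instance] Multigraph.fintE

namespace Multigraph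

/-- The simple graph on the vertices of `G` induced by a set `A` of edges:
two distinct vertices are adjacent if some edge of `A` joins them. -/
def graphOf (G : Multigraph) (A : Finset G.E) : SimpleGraph G.V where
  Adj u v := u ≠ v ∧ ∃ e ∈ A, G.ends e = s(u, v)
  symm := ⟨by
    rintro u v ⟨h, e, he, hev⟩
    exact ⟨h.symm, e, he, by rw [hev, Sym2.eq_swap]⟩⟩
  loopless := ⟨by rintro v ⟨h, -⟩; exact h rfl⟩

/-- The (all-terminal) reliability polynomial of `G`, evaluated at the edge
failure probability `p`. -/
noncomputable def rel (G : Multigraph) (p : ℂ) : ℂ :=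
  ∑ A : Finset G.E,
    if (G.graphOf A).Connected then (1 - p) ^ A.card * p ^ (Fintype.card G.E - A.card) else 0

end Multigraph

/-- A two-terminal graph: a multigraph together with two distinct distinguished
vertices, the source `s` and the sink `t`. -/
structure TTGraph extends Multigraph where
  s : V
  t : V
  hst : s ≠ t

namespace TTGraph

/-- The reliability polynomial of a two-terminal graph. -/
noncomputable def rel (G : TTGraph) (p : ℂ) : ℂ := G.toMultigraph.rel p

/-- `A` is an `s`–`t` split: every vertex is joined by a path (within `A`) to
exactly one of `s`, `t`. -/
def IsSplit (G : TTGraph) (A : Finset G.toMultigraph.E) : Prop :=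
  ∀ v : G.V, Xor' ((G.toMultigraph.graphOf A).Reachable v G.s)
    ((G.toMultigraph.graphOf A).Reachable v G.t)

/-- The split reliability polynomial of a two-terminal graph. -/
noncomputable def split (G : TTGraph) (p : ℂ) : ℂ :=
  ∑ A : Finset G.toMultigraph.E,
    if G.IsSplit A then (1 - p) ^ A.card * p ^ (Fintype.card G.toMultigraph.E - A.card) else 0

/-- The effective edge interaction `y_G(p)`. -/
noncomputable def yEff (G : TTGraph) (p : ℂ) : ℂ := (1 - p) * G.split p / G.rel p + 1

/-- The virtual edge interaction `ŷ_G(p)`. -/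
noncomputable def yVirt (G : TTGraph) (p : ℂ) : ℂ := G.rel p / G.split p + 1

/-- The identifications made in the parallel composition: the two sources are
identified and the two sinks are identified. -/
def parRel (G₁ G₂ : TTGraph) : (G₁.V ⊕ G₂.V) → (G₁.V ⊕ G₂.V) → Prop :=
  fun a b => (a = .inl G₁.s ∧ b = .inr G₂.s) ∨ (a = .inl G₁.t ∧ b = .inr G₂.t)

/-- The parallel composition `G₁ ∥ G₂` of two two-terminal graphs. -/
noncomputable def par (G₁ G₂ : TTGraph) : TTGraph where
  V := Quot (parRel G₁ G₂)
  E := G₁.toMultigraph.E ⊕ G₂.toMultigraph.E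
  ends := Sum.elim (fun e => (G₁.ends e).map (Quot.mk _ ∘ Sum.inl))
    (fun e => (G₂.ends e).map (Quot.mk _ ∘ Sum.inr))
  s := Quot.mk _ (.inl G₁.s)
  t := Quot.mk _ (.inl G₁.t)
  hst := by
    intro h
    have hresp : ∀ a b, parRel G₁ G₂ a b →
        (Sum.elim (fun v => v = G₁.t) (fun v => v = G₂.t) a : Prop) =
        (Sum.elim (fun v => v = G₁.t) (fun v => v = G₂.t) b : Prop) := by
      rintro a b (⟨rfl, rfl⟩ | ⟨rfl, rfl⟩) <;> simp [G₁.hst, G₂.hst]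
    have := congrArg (Quot.lift _ hresp) h
    simp [G₁.hst] at this

/-- The identification made in the series composition: the sink of `G₁` is
identified with the source of `G₂`. -/
def serRel (G₁ G₂ : TTGraph) : (G₁.V ⊕ G₂.V) → (G₁.V ⊕ G₂.V) → Prop :=
  fun a b => a = .inl G₁.t ∧ b = .inr G₂.s

/-- The series composition `G₁ ⋈ G₂` of two two-terminal graphs. -/
noncomputable def ser (G₁ G₂ : TTGraph) : TTGraph where
  V := Quot (serRel G₁ G₂)
  E := G₁.toMultigraph.E ⊕ G₂.toMultigraph.E
  ends := Sum.elim (fun e => (G₁.ends e).map (Quot.mk _ ∘ Sum.inl))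
    (fun e => (G₂.ends e).map (Quot.mk _ ∘ Sum.inr))
  s := Quot.mk _ (.inl G₁.s)
  t := Quot.mk _ (.inr G₂.t)
  hst := by
    intro h
    have hresp : ∀ a b, serRel G₁ G₂ a b →
        (Sum.elim (fun v => v = G₁.t) (fun _ => True) a : Prop) =
        (Sum.elim (fun v => v = G₁.t) (fun _ => True) b : Prop) := by
      rintro a b ⟨rfl, rfl⟩; simp
    have := congrArg (Quot.lift _ hresp) h
    simp [G₁.hst] at this

/-- Inclusion of left-graph vertices into the parallel composition. -/
def ιL (G₁ G₂ : TTGraph) : G₁.V → (G₁.par G₂).V := fun v => Quot.mk _ (.inl v)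

/-- Inclusion of right-graph vertices into the parallel composition. -/
def ιR (G₁ G₂ : TTGraph) : G₂.V → (G₁.par G₂).V := fun v => Quot.mk _ (.inr v)

lemma ιL_inj (G₁ G₂ : TTGraph) : Function.Injective (ιL G₁ G₂) := by
  have hresp : ∀ x y, parRel G₁ G₂ x y →
      Sum.elim (id : G₁.V → G₁.V) (fun v => if v = G₂.t then G₁.t else G₁.s) x =
      Sum.elim (id : G₁.V → G₁.V) (fun v => if v = G₂.t then G₁.t else G₁.s) y := by
    rintro x y (⟨rfl, rfl⟩ | ⟨rfl, rfl⟩) <;> simp [G₂.hst]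
  intro a b h
  exact congrArg (Quot.lift _ hresp) h

lemma ιR_inj (G₁ G₂ : TTGraph) : Function.Injective (ιR G₁ G₂) := by
  have hresp : ∀ x y, parRel G₁ G₂ x y →
      Sum.elim (fun v => if v = G₁.t then G₂.t else G₂.s) (id : G₂.V → G₂.V) x =
      Sum.elim (fun v => if v = G₁.t then G₂.t else G₂.s) (id : G₂.V → G₂.V) y := by
    rintro x y (⟨rfl, rfl⟩ | ⟨rfl, rfl⟩) <;> simp [G₁.hst]
  intro a b h
  exact congrArg (Quot.lift _ hresp) h

lemma ιL_s (G₁ G₂ : TTGraph) : ιL G₁ G₂ G₁.s = (G₁.par G₂).s := rfl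
lemma ιL_t (G₁ G₂ : TTGraph) : ιL G₁ G₂ G₁.t = (G₁.par G₂).t := rfl
lemma glue_s (G₁ G₂ : TTGraph) : ιL G₁ G₂ G₁.s = ιR G₁ G₂ G₂.s :=
  Quot.sound (Or.inl ⟨rfl, rfl⟩)
lemma glue_t (G₁ G₂ : TTGraph) : ιL G₁ G₂ G₁.t = ιR G₁ G₂ G₂.t :=
  Quot.sound (Or.inr ⟨rfl, rfl⟩)

lemma ιR_s (G₁ G₂ : TTGraph) : ιR G₁ G₂ G₂.s = (G₁.par G₂).s := (glue_s G₁ G₂).symm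
lemma ιR_t (G₁ G₂ : TTGraph) : ιR G₁ G₂ G₂.t = (G₁.par G₂).t := (glue_t G₁ G₂).symm

/-- Left part of an edge set of the parallel composition. -/
noncomputable def AL (G₁ G₂ : TTGraph) (A : Finset (G₁.par G₂).toMultigraph.E) :
    Finset G₁.toMultigraph.E :=
  Finset.univ.filter (fun e => (Sum.inl e : G₁.toMultigraph.E ⊕ G₂.toMultigraph.E) ∈ A)

/-- Right part of an edge set of the parallel composition. -/
noncomputable def AR (G₁ G₂ : TTGraph) (A : Finset (G₁.par G₂).toMultigraph.E) :
    Finset G₂.toMultigraph.E :=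
  Finset.univ.filter (fun e => (Sum.inr e : G₁.toMultigraph.E ⊕ G₂.toMultigraph.E) ∈ A)

lemma mem_AL (G₁ G₂ : TTGraph) {A : Finset (G₁.par G₂).toMultigraph.E}
    {e : G₁.toMultigraph.E} : e ∈ AL G₁ G₂ A ↔
      (Sum.inl e : G₁.toMultigraph.E ⊕ G₂.toMultigraph.E) ∈ A := by
  simp [AL]

lemma mem_AR (G₁ G₂ : TTGraph) {A : Finset (G₁.par G₂).toMultigraph.E}
    {e : G₂.toMultigraph.E} : e ∈ AR G₁ G₂ A ↔
      (Sum.inr e : G₁.toMultigraph.E ⊕ G₂.toMultigraph.E) ∈ A := by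
  simp [AR]

lemma adj_ιL (G₁ G₂ : TTGraph) {A : Finset (G₁.par G₂).toMultigraph.E} {a b : G₁.V}
    (h : (G₁.toMultigraph.graphOf (AL G₁ G₂ A)).Adj a b) :
    ((G₁.par G₂).toMultigraph.graphOf A).Adj (ιL G₁ G₂ a) (ιL G₁ G₂ b) := by
  obtain ⟨hne, e, he, hends⟩ := h
  refine ⟨fun hc => hne (ιL_inj G₁ G₂ hc), Sum.inl e, (mem_AL G₁ G₂).mp he, ?_⟩
  show (G₁.ends e).map (Quot.mk _ ∘ Sum.inl) = _
  rw [hends, Sym2.map_pair_eq]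
  rfl

lemma adj_ιR (G₁ G₂ : TTGraph) {A : Finset (G₁.par G₂).toMultigraph.E} {a b : G₂.V}
    (h : (G₂.toMultigraph.graphOf (AR G₁ G₂ A)).Adj a b) :
    ((G₁.par G₂).toMultigraph.graphOf A).Adj (ιR G₁ G₂ a) (ιR G₁ G₂ b) := by
  obtain ⟨hne, e, he, hends⟩ := h
  refine ⟨fun hc => hne (ιR_inj G₁ G₂ hc), Sum.inr e, (mem_AR G₁ G₂).mp he, ?_⟩
  show (G₂.ends e).map (Quot.mk _ ∘ Sum.inr) = _
  rw [hends, Sym2.map_pair_eq]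
  rfl

lemma reach_ιL (G₁ G₂ : TTGraph) {A : Finset (G₁.par G₂).toMultigraph.E} {a b : G₁.V}
    (h : (G₁.toMultigraph.graphOf (AL G₁ G₂ A)).Reachable a b) :
    ((G₁.par G₂).toMultigraph.graphOf A).Reachable (ιL G₁ G₂ a) (ιL G₁ G₂ b) :=
  h.map ⟨ιL G₁ G₂, adj_ιL G₁ G₂⟩

lemma reach_ιR (G₁ G₂ : TTGraph) {A : Finset (G₁.par G₂).toMultigraph.E} {a b : G₂.V}
    (h : (G₂.toMultigraph.graphOf (AR G₁ G₂ A)).Reachable a b) :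
    ((G₁.par G₂).toMultigraph.graphOf A).Reachable (ιR G₁ G₂ a) (ιR G₁ G₂ b) :=
  h.map ⟨ιR G₁ G₂, adj_ιR G₁ G₂⟩

lemma reachable_iff_of_adj {V : Type} {G : SimpleGraph V} (q : V → Prop)
    (hadj : ∀ x y, G.Adj x y → (q x ↔ q y)) {x y : V} (h : G.Reachable x y) :
    q x ↔ q y := by
  obtain ⟨w⟩ := h
  induction w with
  | nil => rfl
  | cons h _ ih => exact (hadj _ _ h).trans ih

lemma reach_par_iff (G₁ G₂ : TTGraph) {A : Finset (G₁.par G₂).toMultigraph.E}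
    {w₁ : G₁.V} {w₂ : G₂.V}
    (hglue : ιL G₁ G₂ w₁ = ιR G₁ G₂ w₂)
    (hs : (G₁.toMultigraph.graphOf (AL G₁ G₂ A)).Reachable G₁.s w₁ ↔
          (G₂.toMultigraph.graphOf (AR G₁ G₂ A)).Reachable G₂.s w₂)
    (ht : (G₁.toMultigraph.graphOf (AL G₁ G₂ A)).Reachable G₁.t w₁ ↔
          (G₂.toMultigraph.graphOf (AR G₁ G₂ A)).Reachable G₂.t w₂) :
    (∀ v : G₁.V, ((G₁.par G₂).toMultigraph.graphOf A).Reachable (ιL G₁ G₂ v) (ιL G₁ G₂ w₁) ↔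
        (G₁.toMultigraph.graphOf (AL G₁ G₂ A)).Reachable v w₁) ∧
    (∀ v : G₂.V, ((G₁.par G₂).toMultigraph.graphOf A).Reachable (ιR G₁ G₂ v) (ιL G₁ G₂ w₁) ↔
        (G₂.toMultigraph.graphOf (AR G₁ G₂ A)).Reachable v w₂) := by
  have hresp : ∀ x y, parRel G₁ G₂ x y →
      Sum.elim (fun v => (G₁.toMultigraph.graphOf (AL G₁ G₂ A)).Reachable v w₁)
        (fun v => (G₂.toMultigraph.graphOf (AR G₁ G₂ A)).Reachable v w₂) x =
      Sum.elim (fun v => (G₁.toMultigraph.graphOf (AL G₁ G₂ A)).Reachable v w₁)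
        (fun v => (G₂.toMultigraph.graphOf (AR G₁ G₂ A)).Reachable v w₂) y := by
    rintro x y (⟨rfl, rfl⟩ | ⟨rfl, rfl⟩)
    · exact propext hs
    · exact propext ht
  set q : (G₁.par G₂).V → Prop := Quot.lift _ hresp with hq
  have hadj : ∀ x y, ((G₁.par G₂).toMultigraph.graphOf A).Adj x y → (q x ↔ q y) := by
    rintro x y ⟨hne, e, he, hends⟩
    cases e with
    | inl e₁ =>
        obtain ⟨a, b, hab⟩ : ∃ a b, G₁.ends e₁ = s(a, b) := by
          induction G₁.ends e₁ using Sym2.ind with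
          | _ a b => exact ⟨a, b, rfl⟩
        have hends' : s(ιL G₁ G₂ a, ιL G₁ G₂ b) = s(x, y) := by
          rw [← hends]
          show _ = (G₁.ends e₁).map (Quot.mk _ ∘ Sum.inl)
          rw [hab, Sym2.map_pair_eq]; rfl
        have hadj₁ : ∀ u v : G₁.V, x = ιL G₁ G₂ u → y = ιL G₁ G₂ v → (q x ↔ q y) := by
          rintro u v rfl rfl
          have huv : (G₁.toMultigraph.graphOf (AL G₁ G₂ A)).Adj u v := by
            refine ⟨fun h => hne (by rw [h]), e₁, (mem_AL G₁ G₂).mpr he, ?_⟩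
            rw [hab]
            have := hends'
            rw [Sym2.eq_iff] at this
            rcases this with ⟨h1, h2⟩ | ⟨h1, h2⟩
            · rw [ιL_inj G₁ G₂ h1, ιL_inj G₁ G₂ h2]
            · rw [ιL_inj G₁ G₂ h1, ιL_inj G₁ G₂ h2, Sym2.eq_swap]
          show (G₁.toMultigraph.graphOf (AL G₁ G₂ A)).Reachable u w₁ ↔
            (G₁.toMultigraph.graphOf (AL G₁ G₂ A)).Reachable v w₁
          exact ⟨fun h => huv.symm.reachable.trans h, fun h => huv.reachable.trans h⟩
        rw [Sym2.eq_iff] at hends'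
        rcases hends' with ⟨h1, h2⟩ | ⟨h1, h2⟩
        · exact hadj₁ a b h1.symm h2.symm
        · exact hadj₁ b a h2.symm h1.symm
    | inr e₂ =>
        obtain ⟨a, b, hab⟩ : ∃ a b, G₂.ends e₂ = s(a, b) := by
          induction G₂.ends e₂ using Sym2.ind with
          | _ a b => exact ⟨a, b, rfl⟩
        have hends' : s(ιR G₁ G₂ a, ιR G₁ G₂ b) = s(x, y) := by
          rw [← hends]
          show _ = (G₂.ends e₂).map (Quot.mk _ ∘ Sum.inr)
          rw [hab, Sym2.map_pair_eq]; rfl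
        have hadj₂ : ∀ u v : G₂.V, x = ιR G₁ G₂ u → y = ιR G₁ G₂ v → (q x ↔ q y) := by
          rintro u v rfl rfl
          have huv : (G₂.toMultigraph.graphOf (AR G₁ G₂ A)).Adj u v := by
            refine ⟨fun h => hne (by rw [h]), e₂, (mem_AR G₁ G₂).mpr he, ?_⟩
            rw [hab]
            have := hends'
            rw [Sym2.eq_iff] at this
            rcases this with ⟨h1, h2⟩ | ⟨h1, h2⟩
            · rw [ιR_inj G₁ G₂ h1, ιR_inj G₁ G₂ h2]
            · rw [ιR_inj G₁ G₂ h1, ιR_inj G₁ G₂ h2, Sym2.eq_swap]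
          show (G₂.toMultigraph.graphOf (AR G₁ G₂ A)).Reachable u w₂ ↔
            (G₂.toMultigraph.graphOf (AR G₁ G₂ A)).Reachable v w₂
          exact ⟨fun h => huv.symm.reachable.trans h, fun h => huv.reachable.trans h⟩
        rw [Sym2.eq_iff] at hends'
        rcases hends' with ⟨h1, h2⟩ | ⟨h1, h2⟩
        · exact hadj₂ a b h1.symm h2.symm
        · exact hadj₂ b a h2.symm h1.symm
  constructor
  · intro v
    constructor
    · intro h
      have := reachable_iff_of_adj q hadj h
      have hqw : q (ιL G₁ G₂ w₁) := SimpleGraph.Reachable.refl w₁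
      exact this.mpr hqw
    · exact reach_ιL G₁ G₂
  · intro v
    constructor
    · intro h
      have := reachable_iff_of_adj q hadj h
      have hqw : q (ιL G₁ G₂ w₁) := SimpleGraph.Reachable.refl w₁
      exact this.mpr hqw
    · intro h
      rw [hglue]
      exact reach_ιR G₁ G₂ h
lemma isSplit_par_iff (G₁ G₂ : TTGraph) (A : Finset (G₁.par G₂).toMultigraph.E) :
    (G₁.par G₂).IsSplit A ↔ G₁.IsSplit (AL G₁ G₂ A) ∧ G₂.IsSplit (AR G₁ G₂ A) := by
  constructor
  · intro h
    have hxs := h (G₁.par G₂).s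
    have h1 : ¬ (G₁.toMultigraph.graphOf (AL G₁ G₂ A)).Reachable G₁.s G₁.t := by
      intro hc
      have : ((G₁.par G₂).toMultigraph.graphOf A).Reachable (G₁.par G₂).s (G₁.par G₂).t :=
        reach_ιL G₁ G₂ hc
      unfold Xor' Xor at hxs
      tauto
    have h2 : ¬ (G₂.toMultigraph.graphOf (AR G₁ G₂ A)).Reachable G₂.s G₂.t := by
      intro hc
      have hr := reach_ιR G₁ G₂ hc
      rw [ιR_s, ιR_t] at hr
      unfold Xor' Xor at hxs
      tauto
    obtain ⟨Ls, Rs⟩ := reach_par_iff G₁ G₂ (glue_s G₁ G₂)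
      (Iff.intro (fun _ => SimpleGraph.Reachable.refl _) (fun _ => SimpleGraph.Reachable.refl _))
      (iff_of_false (fun hc => h1 hc.symm) (fun hc => h2 hc.symm)) (A := A)
    obtain ⟨Lt, Rt⟩ := reach_par_iff G₁ G₂ (glue_t G₁ G₂)
      (iff_of_false h1 h2)
      (Iff.intro (fun _ => SimpleGraph.Reachable.refl _) (fun _ => SimpleGraph.Reachable.refl _))
      (A := A)
    constructor
    · intro v
      have hv := h (ιL G₁ G₂ v)
      have e1 := Ls v
      have e2 := Lt v
      rw [ιL_s] at e1
      rw [ιL_t] at e2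
      unfold Xor' Xor at hv ⊢
      tauto
    · intro v
      have hv := h (ιR G₁ G₂ v)
      have e1 := Rs v
      have e2 := Rt v
      rw [ιL_s] at e1
      rw [ιL_t] at e2
      unfold Xor' Xor at hv ⊢
      tauto
  · rintro ⟨hA₁, hA₂⟩
    have h1 : ¬ (G₁.toMultigraph.graphOf (AL G₁ G₂ A)).Reachable G₁.s G₁.t := by
      have := hA₁ G₁.s
      unfold Xor' Xor at this
      have : ¬ (G₁.toMultigraph.graphOf (AL G₁ G₂ A)).Reachable G₁.s G₁.t := by tauto
      exact this
    have h2 : ¬ (G₂.toMultigraph.graphOf (AR G₁ G₂ A)).Reachable G₂.s G₂.t := by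
      have := hA₂ G₂.s
      unfold Xor' Xor at this
      have : ¬ (G₂.toMultigraph.graphOf (AR G₁ G₂ A)).Reachable G₂.s G₂.t := by tauto
      exact this
    obtain ⟨Ls, Rs⟩ := reach_par_iff G₁ G₂ (glue_s G₁ G₂)
      (Iff.intro (fun _ => SimpleGraph.Reachable.refl _) (fun _ => SimpleGraph.Reachable.refl _))
      (iff_of_false (fun hc => h1 hc.symm) (fun hc => h2 hc.symm)) (A := A)
    obtain ⟨Lt, Rt⟩ := reach_par_iff G₁ G₂ (glue_t G₁ G₂)
      (iff_of_false h1 h2)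
      (Iff.intro (fun _ => SimpleGraph.Reachable.refl _) (fun _ => SimpleGraph.Reachable.refl _))
      (A := A)
    intro x
    induction x using Quot.ind with
    | _ y =>
      cases y with
      | inl v =>
        have hv := hA₁ v
        have e1 := Ls v
        have e2 := Lt v
        rw [ιL_s] at e1
        rw [ιL_t] at e2
        show Xor' (((G₁.par G₂).toMultigraph.graphOf A).Reachable (ιL G₁ G₂ v) (G₁.par G₂).s)
          (((G₁.par G₂).toMultigraph.graphOf A).Reachable (ιL G₁ G₂ v) (G₁.par G₂).t)
        unfold Xor' Xor at hv ⊢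
        tauto
      | inr v =>
        have hv := hA₂ v
        have e1 := Rs v
        have e2 := Rt v
        rw [ιL_s] at e1
        rw [ιL_t] at e2
        show Xor' (((G₁.par G₂).toMultigraph.graphOf A).Reachable (ιR G₁ G₂ v) (G₁.par G₂).s)
          (((G₁.par G₂).toMultigraph.graphOf A).Reachable (ιR G₁ G₂ v) (G₁.par G₂).t)
        unfold Xor' Xor at hv ⊢
        tauto
noncomputable def finsetSumEquiv (α β : Type) [Fintype α] [Fintype β] :
    Finset (α ⊕ β) ≃ Finset α × Finset β where
  toFun A := (Finset.univ.filter (fun a => Sum.inl a ∈ A),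
              Finset.univ.filter (fun b => Sum.inr b ∈ A))
  invFun BC := BC.1.map ⟨Sum.inl, Sum.inl_injective⟩ ∪ BC.2.map ⟨Sum.inr, Sum.inr_injective⟩
  left_inv A := by ext x; cases x <;> simp
  right_inv BC := by
    refine Prod.ext ?_ ?_ <;> ext x <;> simp
end TTGraph

/-- The split reliability polynomial is multiplicative under parallel
composition: `S(G₁ ∥ G₂; p) = S(G₁; p) · S(G₂; p)`. -/
theorem split_par (G₁ G₂ : TTGraph) (p : ℂ) :
    (G₁.par G₂).split p = G₁.split p * G₂.split p := by
  classical
  have hM : Fintype.card (G₁.par G₂).toMultigraph.E =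
      Fintype.card G₁.toMultigraph.E + Fintype.card G₂.toMultigraph.E :=
    (Fintype.card_congr (Equiv.refl _)).trans (Fintype.card_sum)
  unfold TTGraph.split
  refine (Fintype.sum_equiv
    ((TTGraph.finsetSumEquiv G₁.toMultigraph.E G₂.toMultigraph.E :
      Finset (G₁.par G₂).toMultigraph.E ≃
        Finset G₁.toMultigraph.E × Finset G₂.toMultigraph.E))
    _
    (fun BC : Finset G₁.toMultigraph.E × Finset G₂.toMultigraph.E =>
      (if G₁.IsSplit BC.1 then
        (1 - p) ^ BC.1.card * p ^ (Fintype.card G₁.toMultigraph.E - BC.1.card) else 0) *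
      (if G₂.IsSplit BC.2 then
        (1 - p) ^ BC.2.card * p ^ (Fintype.card G₂.toMultigraph.E - BC.2.card) else 0))
    ?_).trans ?_
  · intro (A : Finset (G₁.par G₂).toMultigraph.E)
    have e1 : ((TTGraph.finsetSumEquiv G₁.toMultigraph.E G₂.toMultigraph.E) A).1 =
        TTGraph.AL G₁ G₂ A := by
      ext x; simp [TTGraph.finsetSumEquiv, TTGraph.AL]; exact Iff.rfl
    have e2 : ((TTGraph.finsetSumEquiv G₁.toMultigraph.E G₂.toMultigraph.E) A).2 =
        TTGraph.AR G₁ G₂ A := by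
      ext x; simp [TTGraph.finsetSumEquiv, TTGraph.AR]; exact Iff.rfl
    beta_reduce
    rw [e1, e2]
    have hA : ((TTGraph.AL G₁ G₂ A).map ⟨Sum.inl, Sum.inl_injective⟩ ∪
        (TTGraph.AR G₁ G₂ A).map ⟨Sum.inr, Sum.inr_injective⟩ :
          Finset (G₁.toMultigraph.E ⊕ G₂.toMultigraph.E)) = A := by
      ext x
      cases x <;> simp [TTGraph.mem_AL, TTGraph.mem_AR] <;> exact Iff.rfl
    have hcard : A.card = (TTGraph.AL G₁ G₂ A).card + (TTGraph.AR G₁ G₂ A).card := by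
      have hd : Disjoint ((TTGraph.AL G₁ G₂ A).map ⟨Sum.inl, Sum.inl_injective⟩)
          ((TTGraph.AR G₁ G₂ A).map ⟨Sum.inr, Sum.inr_injective⟩ :
            Finset (G₁.toMultigraph.E ⊕ G₂.toMultigraph.E)) := by
        simp [Finset.disjoint_left]
      have hu := Finset.card_union_of_disjoint hd
      rw [Finset.card_map, Finset.card_map] at hu
      rw [← hu]
      exact (congrArg Finset.card hA).symm
    have hb : (TTGraph.AL G₁ G₂ A).card ≤ Fintype.card G₁.toMultigraph.E :=
      Finset.card_le_univ _
    have hc : (TTGraph.AR G₁ G₂ A).card ≤ Fintype.card G₂.toMultigraph.E :=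
      Finset.card_le_univ _
    simp only [TTGraph.isSplit_par_iff, hcard, hM]
    by_cases h : G₁.IsSplit (TTGraph.AL G₁ G₂ A) ∧ G₂.IsSplit (TTGraph.AR G₁ G₂ A)
    · rw [if_pos h, if_pos h.1, if_pos h.2]
      have hexp : Fintype.card G₁.toMultigraph.E + Fintype.card G₂.toMultigraph.E -
          ((TTGraph.AL G₁ G₂ A).card + (TTGraph.AR G₁ G₂ A).card) =
          (Fintype.card G₁.toMultigraph.E - (TTGraph.AL G₁ G₂ A).card) +
          (Fintype.card G₂.toMultigraph.E - (TTGraph.AR G₁ G₂ A).card) := by omega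
      rw [hexp, pow_add, pow_add]
      ring
    · rw [if_neg h]
      rcases not_and_or.mp h with h' | h'
      · rw [if_neg h', zero_mul]
      · rw [if_neg h', mul_zero]
  · rw [Fintype.sum_prod_type, Finset.sum_mul_sum]
end

section
/- Let G be a two-terminal graph with terminals s,t and let Ĝ denote the graph obtained by merging s and t into a single vertex (edges between s and t becoming loops). Then R(Ĝ;p) = R(G;p) + S(G;p) as polynomials in p. -/
open scoped Classical

/-- The multigraph `Ĝ` obtained from a two-terminal graph `G` by merging the source and
the sink into a single vertex (edges between them become loops). -/
def TTGraph.merge (G : TTGraph) : Multigraph where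
  V := Quot (fun a b => a = G.s ∧ b = G.t)
  E := G.toMultigraph.E
  ends := fun e => (G.ends e).map (Quot.mk _)

namespace TTGraph

/-- The quotient map of the merge. -/
def mq (G : TTGraph) : G.V → G.merge.V := Quot.mk _

lemma eqvGen_elim (G : TTGraph) :
    ∀ a b : G.V, Relation.EqvGen (fun a b => a = G.s ∧ b = G.t) a b →
      a = b ∨ (a = G.s ∧ b = G.t) ∨ (a = G.t ∧ b = G.s) := by
  intro a b h
  have hst := G.hst
  induction h with
  | rel a b h => exact Or.inr (Or.inl h)
  | refl => exact Or.inl rfl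
  | symm a b h ih => tauto
  | trans a b c h1 h2 ih1 ih2 =>
      rcases ih1 with rfl | ⟨rfl, rfl⟩ | ⟨rfl, rfl⟩ <;>
        rcases ih2 with rfl | ⟨h3, rfl⟩ | ⟨h3, rfl⟩ <;> simp_all

lemma mq_eq_iff (G : TTGraph) (a b : G.V) :
    G.mq a = G.mq b ↔ a = b ∨ (a = G.s ∧ b = G.t) ∨ (a = G.t ∧ b = G.s) := by
  constructor
  · intro h
    exact G.eqvGen_elim a b (Quot.eq.mp h)
  · rintro (rfl | ⟨rfl, rfl⟩ | ⟨rfl, rfl⟩)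
    · rfl
    · exact Quot.sound ⟨rfl, rfl⟩
    · exact (Quot.sound ⟨rfl, rfl⟩).symm

/-- The combined relation: reachability in `G` or reachability to opposite terminals. -/
def mP (G : TTGraph) (A : Finset G.toMultigraph.E) (u v : G.V) : Prop :=
  (G.toMultigraph.graphOf A).Reachable u v ∨
  ((G.toMultigraph.graphOf A).Reachable u G.s ∧ (G.toMultigraph.graphOf A).Reachable v G.t) ∨
  ((G.toMultigraph.graphOf A).Reachable u G.t ∧ (G.toMultigraph.graphOf A).Reachable v G.s)

lemma mP_trans (G : TTGraph) (A : Finset G.toMultigraph.E) {u v w : G.V}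
    (h1 : G.mP A u v) (h2 : G.mP A v w) : G.mP A u w := by
  rcases h1 with h1 | ⟨h1a, h1b⟩ | ⟨h1a, h1b⟩ <;>
    rcases h2 with h2 | ⟨h2a, h2b⟩ | ⟨h2a, h2b⟩
  · exact Or.inl (h1.trans h2)
  · exact Or.inr (Or.inl ⟨h1.trans h2a, h2b⟩)
  · exact Or.inr (Or.inr ⟨h1.trans h2a, h2b⟩)
  · exact Or.inr (Or.inl ⟨h1a, h2.symm.trans h1b⟩)
  · exact Or.inl (h1a.trans (h2b.trans (h1b.symm.trans h2a)).symm)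
  · exact Or.inl (h1a.trans h2b.symm)
  · exact Or.inr (Or.inr ⟨h1a, h2.symm.trans h1b⟩)
  · exact Or.inl (h1a.trans h2b.symm)
  · exact Or.inr (Or.inr ⟨h1a, h2b⟩)

lemma reach_map (G : TTGraph) (A : Finset G.toMultigraph.E) {u v : G.V}
    (h : (G.toMultigraph.graphOf A).Reachable u v) :
    (G.merge.graphOf A).Reachable (G.mq u) (G.mq v) := by
  rw [SimpleGraph.reachable_iff_reflTransGen] at h
  induction h with
  | refl => exact SimpleGraph.Reachable.refl _
  | @tail m c h1 h2 ih =>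
      refine ih.trans ?_
      by_cases hq : G.mq m = G.mq c
      · rw [show G.mq m = G.mq c from hq]
      · obtain ⟨hne, e, he, hev⟩ := h2
        refine SimpleGraph.Adj.reachable ⟨hq, e, he, ?_⟩
        show (G.ends e).map (G.mq) = _
        rw [hev, Sym2.map_pair_eq]

lemma mq_s_eq_t (G : TTGraph) : G.mq G.s = G.mq G.t := Quot.sound ⟨rfl, rfl⟩

lemma merge_reach_iff (G : TTGraph) (A : Finset G.toMultigraph.E) (u v : G.V) :
    (G.merge.graphOf A).Reachable (G.mq u) (G.mq v) ↔ G.mP A u v := by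
  constructor
  · intro h
    rw [SimpleGraph.reachable_iff_reflTransGen] at h
    have key : ∀ x y : G.merge.V, Relation.ReflTransGen (G.merge.graphOf A).Adj x y →
        ∀ a b : G.V, x = G.mq a → y = G.mq b → G.mP A a b := by
      intro x y h
      induction h with
      | refl =>
          intro a b ha hb
          rcases (G.mq_eq_iff a b).mp (ha.symm.trans hb) with rfl | ⟨rfl, rfl⟩ | ⟨rfl, rfl⟩
          · exact Or.inl (SimpleGraph.Reachable.refl _)
          · exact Or.inr (Or.inl ⟨SimpleGraph.Reachable.refl _, SimpleGraph.Reachable.refl _⟩)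
          · exact Or.inr (Or.inr ⟨SimpleGraph.Reachable.refl _, SimpleGraph.Reachable.refl _⟩)
      | @tail m y' h1 h2 ih =>
          intro a b ha hb
          obtain ⟨hne, e, he, hev⟩ := h2
          obtain ⟨⟨c, d⟩, hc0⟩ := Quot.exists_rep (G.ends e)
          have hc : G.ends e = s(c, d) := hc0.symm
          · have : (G.ends e).map (G.mq) = s(G.mq c, G.mq d) := by
              rw [hc, Sym2.map_pair_eq]
            have hev' : s(G.mq c, G.mq d) = s(m, y') := by
              rw [← this]; exact hev
            have hcd : c ≠ d := by
              rintro rfl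
              rcases Sym2.eq_iff.mp hev' with ⟨h1', h2'⟩ | ⟨h1', h2'⟩
              · exact hne (h1'.symm.trans h2')
              · exact hne (h2'.symm.trans h1')
            have hadj : (G.toMultigraph.graphOf A).Adj c d := ⟨hcd, e, he, hc⟩
            rcases Sym2.eq_iff.mp hev' with ⟨h1', h2'⟩ | ⟨h1', h2'⟩
            · -- mq c = m, mq d = mq b
              have hmc : G.mP A a c := ih a c ha h1'.symm
              have hdb : G.mP A d b := by
                rcases (G.mq_eq_iff d b).mp (h2'.trans hb) with rfl | ⟨rfl, rfl⟩ | ⟨rfl, rfl⟩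
                · exact Or.inl (SimpleGraph.Reachable.refl _)
                · exact Or.inr (Or.inl ⟨SimpleGraph.Reachable.refl _, SimpleGraph.Reachable.refl _⟩)
                · exact Or.inr (Or.inr ⟨SimpleGraph.Reachable.refl _, SimpleGraph.Reachable.refl _⟩)
              exact G.mP_trans A (G.mP_trans A hmc (Or.inl hadj.reachable)) hdb
            · -- mq d = m, mq c = mq b
              have hmc : G.mP A a d := ih a d ha h2'.symm
              have hdb : G.mP A c b := by
                rcases (G.mq_eq_iff c b).mp (h1'.trans hb) with rfl | ⟨rfl, rfl⟩ | ⟨rfl, rfl⟩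
                · exact Or.inl (SimpleGraph.Reachable.refl _)
                · exact Or.inr (Or.inl ⟨SimpleGraph.Reachable.refl _, SimpleGraph.Reachable.refl _⟩)
                · exact Or.inr (Or.inr ⟨SimpleGraph.Reachable.refl _, SimpleGraph.Reachable.refl _⟩)
              exact G.mP_trans A (G.mP_trans A hmc (Or.inl hadj.symm.reachable)) hdb
    exact key _ _ h u v rfl rfl
  · rintro (h | ⟨h1, h2⟩ | ⟨h1, h2⟩)
    · exact G.reach_map A h
    · exact ((G.reach_map A h1).trans ((G.mq_s_eq_t ▸ SimpleGraph.Reachable.refl (G.mq G.s)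
        : (G.merge.graphOf A).Reachable (G.mq G.s) (G.mq G.t)))).trans (G.reach_map A h2).symm
    · exact ((G.reach_map A h1).trans ((G.mq_s_eq_t ▸ SimpleGraph.Reachable.refl (G.mq G.s)
        : (G.merge.graphOf A).Reachable (G.mq G.s) (G.mq G.t)).symm)).trans (G.reach_map A h2).symm

lemma merge_connected_iff (G : TTGraph) (A : Finset G.toMultigraph.E) :
    (G.merge.graphOf A).Connected ↔ (G.toMultigraph.graphOf A).Connected ∨ G.IsSplit A := by
  constructor
  · intro h
    have hP : ∀ u v : G.V, G.mP A u v := fun u v =>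
      (G.merge_reach_iff A u v).mp (h.preconnected _ _)
    by_cases hstr : (G.toMultigraph.graphOf A).Reachable G.s G.t
    · left
      rw [SimpleGraph.connected_iff]
      refine ⟨fun u v => ?_, ⟨G.s⟩⟩
      · rcases hP u v with h | ⟨h1, h2⟩ | ⟨h1, h2⟩
        · exact h
        · exact (h1.trans hstr).trans h2.symm
        · exact (h1.trans hstr.symm).trans h2.symm
    · right
      intro v
      have hv : (G.toMultigraph.graphOf A).Reachable v G.s ∨
          (G.toMultigraph.graphOf A).Reachable v G.t := by
        rcases hP v G.s with h | ⟨h1, h2⟩ | ⟨h1, h2⟩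
        · exact Or.inl h
        · exact Or.inl h1
        · exact Or.inr h1
      rcases hv with h | h
      · exact Or.inl ⟨h, fun h' => hstr (h.symm.trans h')⟩
      · exact Or.inr ⟨h, fun h' => hstr (h'.symm.trans h)⟩
  · rintro (h | h)
    · rw [SimpleGraph.connected_iff]
      refine ⟨?_, ?_⟩
      case refine_2 => obtain ⟨v⟩ := h.nonempty; exact ⟨G.mq v⟩
      · intro x y
        obtain ⟨a, rfl⟩ := Quot.exists_rep x
        obtain ⟨b, rfl⟩ := Quot.exists_rep y
        exact (G.merge_reach_iff A a b).mpr (Or.inl (h.preconnected a b))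
    · rw [SimpleGraph.connected_iff]
      refine ⟨?_, ⟨G.mq G.s⟩⟩
      intro x y
      obtain ⟨a, rfl⟩ := Quot.exists_rep x
      obtain ⟨b, rfl⟩ := Quot.exists_rep y
      refine (G.merge_reach_iff A a b).mpr ?_
      have ha := Or.imp And.left And.left (h a)
      have hb := Or.imp And.left And.left (h b)
      rcases ha with ha | ha <;> rcases hb with hb | hb
      · exact Or.inl (ha.trans hb.symm)
      · exact Or.inr (Or.inl ⟨ha, hb⟩)
      · exact Or.inr (Or.inr ⟨ha, hb⟩)
      · exact Or.inl (ha.trans hb.symm)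

lemma not_connected_and_split (G : TTGraph) (A : Finset G.toMultigraph.E)
    (hc : (G.toMultigraph.graphOf A).Connected) (hs : G.IsSplit A) : False := by
  have := hs G.s
  rcases this with ⟨h1, h2⟩ | ⟨h1, h2⟩
  · exact h2 (hc.preconnected G.s G.t)
  · exact h2 (SimpleGraph.Reachable.refl _)

end TTGraph

/-- Merging the two terminals of `G` gives
`R(Ĝ;p) = R(G;p) + S(G;p)`. -/
theorem rel_merge (G : TTGraph) (p : ℂ) :
    G.merge.rel p = G.rel p + G.split p := by
  have h1 : G.merge.rel p = ∑ A : Finset G.toMultigraph.E,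
      if (G.merge.graphOf A).Connected then
        (1 - p) ^ A.card * p ^ (Fintype.card G.toMultigraph.E - A.card) else 0 := rfl
  rw [h1]
  show _ = G.toMultigraph.rel p + _
  unfold Multigraph.rel TTGraph.split
  rw [← Finset.sum_add_distrib]
  refine Finset.sum_congr rfl fun A _ => ?_
  rw [G.merge_connected_iff A]
  by_cases hc : (G.toMultigraph.graphOf A).Connected <;>
    by_cases hs : G.IsSplit A
  · exact absurd hs (fun hs => G.not_connected_and_split A hc hs)
  · simp [hc, hs]
  · simp [hc, hs]
  · simp [hc, hs]
end

section
/- Let ε > 0 and let a, b, c ∈ B(0,ε) be complex numbers such that the convex cone spanned by a, b, c equals all of ℂ. Then the set aℕ + bℕ + cℕ = {ma + nb + kc : m,n,k ∈ ℕ} is ε-dense in ℂ, i.e., every z ∈ ℂ is within distance ε of some element of this set. -/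
/-- Rounding a nonnegative real to the nearest natural number. -/
private lemma nat_round_close (x : ℝ) (hx : 0 ≤ x) :
    ∃ m : ℕ, |x - (m : ℝ)| ≤ 1 / 2 := by
  refine ⟨(round x).toNat, ?_⟩
  have h0 : (0 : ℤ) ≤ round x := by
    rw [round_eq]
    exact Int.floor_nonneg.2 (by linarith)
  have : ((round x).toNat : ℝ) = (round x : ℝ) := by
    exact_mod_cast Int.toNat_of_nonneg h0
  rw [this]
  exact abs_sub_round x

/-- Two-generator rounding lemma. -/
private lemma two_gen (ε : ℝ) (g h : ℂ) (hg : ‖g‖ < ε)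
    (hh : ‖h‖ < ε) (x y : ℝ) (hx : 0 ≤ x) (hy : 0 ≤ y) :
    ∃ m n : ℕ, ‖x • g + y • h - ((m : ℂ) * g + (n : ℂ) * h)‖ < ε := by
  obtain ⟨m, hm⟩ := nat_round_close x hx
  obtain ⟨n, hn⟩ := nat_round_close y hy
  refine ⟨m, n, ?_⟩
  have e : x • g + y • h - ((m : ℂ) * g + (n : ℂ) * h)
      = ((x - m : ℝ) : ℂ) * g + ((y - n : ℝ) : ℂ) * h := by
    push_cast
    simp [Complex.real_smul]
    ring
  rw [e]
  have hga : 0 ≤ ‖g‖ := norm_nonneg g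
  have hha : 0 ≤ ‖h‖ := norm_nonneg h
  calc ‖((x - m : ℝ) : ℂ) * g + ((y - n : ℝ) : ℂ) * h‖
      ≤ ‖((x - m : ℝ) : ℂ) * g‖ + ‖((y - n : ℝ) : ℂ) * h‖ :=
        norm_add_le _ _
    _ = |x - (m : ℝ)| * ‖g‖ + |y - (n : ℝ)| * ‖h‖ := by
        rw [norm_mul, norm_mul, Complex.norm_real, Complex.norm_real, Real.norm_eq_abs, Real.norm_eq_abs]
    _ ≤ (1 / 2) * ‖g‖ + (1 / 2) * ‖h‖ := by
        gcongr
    _ < ε := by nlinarith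

/-- If `a, b, c` lie in the open disk `B(0,ε)` and the convex cone they
span is all of `ℂ`, then the set `aℕ + bℕ + cℕ` is `ε`-dense in `ℂ`. -/
theorem natCone_eps_dense (ε : ℝ) (hε : 0 < ε) (a b c : ℂ)
    (ha : ‖a‖ < ε) (hb : ‖b‖ < ε) (hc : ‖c‖ < ε)
    (hcone : ∀ z : ℂ, ∃ l₁ l₂ l₃ : ℝ, 0 ≤ l₁ ∧ 0 ≤ l₂ ∧ 0 ≤ l₃ ∧
      z = l₁ • a + l₂ • b + l₃ • c) :
    ∀ z : ℂ, ∃ m n k : ℕ, ‖z - ((m : ℂ) * a + (n : ℂ) * b + (k : ℂ) * c)‖ < ε := by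
  -- extract a positive relation α a + β b + γ c = 0 with α, β, γ ≥ 1
  obtain ⟨p, q, r, hp, hq, hr, hrel⟩ := hcone (-(a + b + c))
  set α := 1 + p with hα
  set β := 1 + q with hβ
  set γ := 1 + r with hγ
  have hα1 : (1 : ℝ) ≤ α := by simp [hα]; linarith
  have hβ1 : (1 : ℝ) ≤ β := by simp [hβ]; linarith
  have hγ1 : (1 : ℝ) ≤ γ := by simp [hγ]; linarith
  have hrel0 : (α : ℂ) * a + (β : ℂ) * b + (γ : ℂ) * c = 0 := by
    have := hrel
    simp only [Complex.real_smul] at this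
    push_cast [hα, hβ, hγ]
    linear_combination -this
  intro z
  obtain ⟨l₁, l₂, l₃, hl₁, hl₂, hl₃, hz⟩ := hcone z
  simp only [Complex.real_smul] at hz
  have hαpos : (0:ℝ) < α := by linarith
  have hβpos : (0:ℝ) < β := by linarith
  have hγpos : (0:ℝ) < γ := by linarith
  set t := min (l₁ / α) (min (l₂ / β) (l₃ / γ)) with ht
  have ht1 : t ≤ l₁ / α := min_le_left _ _
  have ht2 : t ≤ l₂ / β := le_trans (min_le_right _ _) (min_le_left _ _)
  have ht3 : t ≤ l₃ / γ := le_trans (min_le_right _ _) (min_le_right _ _)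
  have hx1 : 0 ≤ l₁ - t * α := by
    nlinarith [mul_le_mul_of_nonneg_right ht1 hαpos.le, div_mul_cancel₀ l₁ hαpos.ne']
  have hx2 : 0 ≤ l₂ - t * β := by
    nlinarith [mul_le_mul_of_nonneg_right ht2 hβpos.le, div_mul_cancel₀ l₂ hβpos.ne']
  have hx3 : 0 ≤ l₃ - t * γ := by
    nlinarith [mul_le_mul_of_nonneg_right ht3 hγpos.le, div_mul_cancel₀ l₃ hγpos.ne']
  -- subtract t times the relation
  have hz' : z = ((l₁ - t * α : ℝ) : ℂ) * a + ((l₂ - t * β : ℝ) : ℂ) * b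
      + ((l₃ - t * γ : ℝ) : ℂ) * c := by
    push_cast
    linear_combination hz + (t : ℂ) * hrel0
  -- one of the three new coefficients is zero
  rcases le_total (l₁ / α) (min (l₂ / β) (l₃ / γ)) with hmin | hmin
  · -- t = l₁ / α, so first coefficient vanishes
    have htval : t = l₁ / α := min_eq_left hmin
    have hz0 : l₁ - t * α = 0 := by
      rw [htval]; field_simp; ring
    obtain ⟨n, k, hnk⟩ := two_gen ε b c hb hc (l₂ - t * β) (l₃ - t * γ) hx2 hx3
    refine ⟨0, n, k, ?_⟩
    have : z - (((0:ℕ) : ℂ) * a + (n : ℂ) * b + (k : ℂ) * c)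
        = (l₂ - t * β) • b + (l₃ - t * γ) • c - ((n : ℂ) * b + (k : ℂ) * c) := by
      rw [hz', hz0]
      simp only [Complex.real_smul]
      push_cast
      try ring
    rw [this]; exact hnk
  · rcases le_total (l₂ / β) (l₃ / γ) with hmin2 | hmin2
    · -- t = l₂ / β
      have htval : t = l₂ / β := by
        rw [ht, min_eq_right hmin, min_eq_left hmin2]
      have hz0 : l₂ - t * β = 0 := by
        rw [htval]; field_simp; ring
      obtain ⟨m, k, hmk⟩ := two_gen ε a c ha hc (l₁ - t * α) (l₃ - t * γ) hx1 hx3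
      refine ⟨m, 0, k, ?_⟩
      have : z - ((m : ℂ) * a + ((0:ℕ) : ℂ) * b + (k : ℂ) * c)
          = (l₁ - t * α) • a + (l₃ - t * γ) • c - ((m : ℂ) * a + (k : ℂ) * c) := by
        rw [hz', hz0]
        simp [Complex.real_smul]
        try ring
      rw [this]; exact hmk
    · -- t = l₃ / γ
      have htval : t = l₃ / γ := by
        rw [ht, min_eq_right hmin, min_eq_right hmin2]
      have hz0 : l₃ - t * γ = 0 := by
        rw [htval]; field_simp; ring
      obtain ⟨m, n, hmn⟩ := two_gen ε a b ha hb (l₁ - t * α) (l₂ - t * β) hx1 hx2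
      refine ⟨m, n, 0, ?_⟩
      have : z - ((m : ℂ) * a + (n : ℂ) * b + ((0:ℕ) : ℂ) * c)
          = (l₁ - t * α) • a + (l₂ - t * β) • b - ((m : ℂ) * a + (n : ℂ) * b) := by
        rw [hz', hz0]
        simp [Complex.real_smul]
        try ring
      rw [this]; exact hmn
end
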